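/- arXiv:1410.5803 — 3 statements merged into one kernel-verified Lean document; each statement's English description precedes it below -/
import Mathlib

section
/- For every positive integer M, the following identity of rational functions in t, w, q holds: ((1-q^2)(1-q^M)/((1-t*q^2)(1-w*q^M))) * (1 + q^2/(1-q) + q^6/((1-q)(1-q^2))) = 1 + q^2*(t+q)/(1-t*q^2) + (q^6/((1-t*q^2)(1-w*q^M))) * ([M]_q + (w-1)*(q^{M-3} + q^{M-6})), where [M]_q = 1+q+\cdots+q^{M-1}. -/
noncomputable section

open MvPolynomial Finset

/-- The field of rational functions in `t`, `w` and `q` over `ℚ`. -/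
abbrev F : Type := FractionRing (MvPolynomial (Fin 3) ℚ)

def t : F := algebraMap (MvPolynomial (Fin 3) ℚ) F (X 0)
def w : F := algebraMap (MvPolynomial (Fin 3) ℚ) F (X 1)
def q : F := algebraMap (MvPolynomial (Fin 3) ℚ) F (X 2)

lemma key (f : Fin 3 → ℚ) (p : MvPolynomial (Fin 3) ℚ) (hp : eval f p ≠ 0) :
    algebraMap (MvPolynomial (Fin 3) ℚ) F p ≠ 0 := by
  intro h0
  apply hp
  have hinj := IsFractionRing.injective (MvPolynomial (Fin 3) ℚ) F
  have : p = 0 := hinj (by simpa using h0)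
  simp [this]

set_option maxHeartbeats 2000000 in
/-- Proposition on parts 2 and M: the exponents `M-3`, `M-6` are interpreted as
integer powers in the rational function field. -/
theorem stmt3 (M : ℕ) (hM : 1 ≤ M) :
    ((1 - q ^ 2) * (1 - q ^ M) / ((1 - t * q ^ 2) * (1 - w * q ^ M))) *
        (1 + q ^ 2 / (1 - q) + q ^ 6 / ((1 - q) * (1 - q ^ 2)))
      = 1 + q ^ 2 * (t + q) / (1 - t * q ^ 2)
        + (q ^ 6 / ((1 - t * q ^ 2) * (1 - w * q ^ M))) *
          ((∑ i ∈ range M, q ^ i) +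
            (w - 1) * (q ^ ((M : ℤ) - 3) + q ^ ((M : ℤ) - 6))) := by
  have hq : q ≠ 0 := key (fun _ => 1) (X 2) (by simp)
  have h1 : (1 : F) - q ≠ 0 := by
    have := key (fun _ => 0) (1 - X 2) (by simp)
    simpa [q, map_sub] using this
  have h2 : (1 : F) - q ^ 2 ≠ 0 := by
    have := key (fun _ => 0) (1 - X 2 ^ 2) (by simp)
    simpa [q, map_sub, map_pow] using this
  have h3 : (1 : F) - t * q ^ 2 ≠ 0 := by
    have := key (fun _ => 0) (1 - X 0 * X 2 ^ 2) (by simp)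
    simpa [t, q, map_sub, map_mul, map_pow] using this
  have h4 : (1 : F) - w * q ^ M ≠ 0 := by
    have := key (fun _ => 0) (1 - X 1 * X 2 ^ M) (by simp)
    simpa [w, q, map_sub, map_mul, map_pow] using this
  have hq1 : q ≠ 1 := by
    intro h; exact h1 (by rw [h]; ring)
  rw [geom_sum_eq hq1]
  have e3 : q ^ ((M : ℤ) - 3) = q ^ M / q ^ 3 := by
    rw [zpow_sub₀ hq]; norm_cast
  have e6 : q ^ ((M : ℤ) - 6) = q ^ M / q ^ 6 := by
    rw [zpow_sub₀ hq]; norm_cast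
  rw [e3, e6]
  have hq1' : q - 1 ≠ 0 := by
    intro h; apply h1; linear_combination -h
  have hq3 : q ^ 3 ≠ 0 := pow_ne_zero _ hq
  have hq6 : q ^ 6 ≠ 0 := pow_ne_zero _ hq
  field_simp [h1, h2, h3, h4, hq1', hq3, hq6]
  have h3' : (1 : F) - q ^ 2 * t ≠ 0 := by rwa [mul_comm]
  have h4' : (1 : F) - q ^ M * w ≠ 0 := by rwa [mul_comm]
  field_simp
  ring

end
end

section
/- For every even positive integer M ≥ 4, the following identity of rational functions in t, w, q holds: ((1-q)(1-q^M)/((1-t*q)(1-w*q^M))) * (1 + q/(1-q) + q^4/((1-q)(1-q^2))) = 1 + q*t/(1-t*q) + (q^4/((1-t*q)(1-w*q^M))) * ([M/2]_{q^2} + (w-1)*q^{M-4}), where [M/2]_{q^2} = 1 + q^2 + q^4 + \cdots + q^{M-2}. -/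
noncomputable section

open MvPolynomial Finset

lemma map_ne_zero_of_eval (p : MvPolynomial (Fin 3) ℚ)
    (h : eval (fun _ => (0:ℚ)) p ≠ 0) :
    algebraMap (MvPolynomial (Fin 3) ℚ) F p ≠ 0 := by
  intro h0
  apply h
  have : p = 0 := (map_eq_zero_iff _ (IsFractionRing.injective _ _)).mp h0
  simp [this]

set_option maxHeartbeats 1000000 in
/-- The first-Rogers-Ramanujan analogue of the two-part lemma, for even `M ≥ 4`.
Here `[M/2]_{q²} = 1 + q² + ⋯ + q^{M-2}`. -/
theorem stmt5 (M : ℕ) (hM : 4 ≤ M) (hME : Even M) :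
    ((1 - q) * (1 - q ^ M) / ((1 - t * q) * (1 - w * q ^ M))) *
        (1 + q / (1 - q) + q ^ 4 / ((1 - q) * (1 - q ^ 2)))
      = 1 + q * t / (1 - t * q)
        + (q ^ 4 / ((1 - t * q) * (1 - w * q ^ M))) *
          ((∑ i ∈ range (M / 2), q ^ (2 * i)) + (w - 1) * q ^ (M - 4)) := by
  obtain ⟨k, hk⟩ : ∃ k, M = k + 4 := ⟨M - 4, by omega⟩
  have h1 : (1 : F) - q ≠ 0 := by
    have := map_ne_zero_of_eval (1 - X 2) (by simp)
    simpa [q, map_sub] using this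
  have h2 : (1 : F) - q ^ 2 ≠ 0 := by
    have := map_ne_zero_of_eval (1 - X 2 ^ 2) (by simp)
    simpa [q, map_sub, map_pow] using this
  have h3 : (1 : F) - t * q ≠ 0 := by
    have := map_ne_zero_of_eval (1 - X 0 * X 2) (by simp)
    simpa [t, q, map_sub, map_mul] using this
  have h4 : (1 : F) - w * q ^ M ≠ 0 := by
    have := map_ne_zero_of_eval (1 - X 1 * X 2 ^ M) (by simp [hk])
    simpa [w, q, map_sub, map_mul, map_pow] using this
  have hq2 : (q : F) ^ 2 ≠ 1 := fun h => h2 (by rw [h]; ring)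
  have hsum : (∑ i ∈ range (M / 2), q ^ (2 * i)) = (q ^ M - 1) / (q ^ 2 - 1) := by
    have : ∀ i, (q : F) ^ (2 * i) = (q ^ 2) ^ i := fun i => by rw [← pow_mul]
    rw [Finset.sum_congr rfl (fun i _ => this i), geom_sum_eq hq2, ← pow_mul,
      Nat.mul_div_cancel' hME.two_dvd]
  have h2' : (q : F) ^ 2 - 1 ≠ 0 := fun h => h2 (by linear_combination -h)
  have hM4 : M - 4 = k := by omega
  rw [hk] at h4
  rw [hsum, hM4, hk]
  rw [pow_add] at h4 ⊢
  generalize q ^ k = r at h4 ⊢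
  have h3' : (1:F) - q * t ≠ 0 := by rwa [mul_comm]
  have h4' : (1:F) - q ^ 4 * r * w ≠ 0 := by convert h4 using 2; ring
  field_simp
  ring
end
end

section
/- The following identity of rational functions in t, w, q holds: 1 + q^2*(t+w*q)/(1-t*q^2) + q^6*(w^2+q+q^2)/((1-t*q^2)(1-w*q^3)) = ((1-q^2)(1-q^3)/((1-t*q^2)(1-w*q^3))) * (1 + q^2/(1-q) + q^6/((1-q)(1-q^2))). -/
noncomputable section

open MvPolynomial

lemma alg_ne_zero (p : MvPolynomial (Fin 3) ℚ) (hp : eval 0 p = 1) :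
    algebraMap (MvPolynomial (Fin 3) ℚ) F p ≠ 0 := by
  have hpne : p ≠ 0 := fun h => by simp [h] at hp
  exact fun h => hpne (IsFractionRing.injective (MvPolynomial (Fin 3) ℚ) F (by simpa using h))

lemma h1 : (1 : F) - t * q ^ 2 ≠ 0 := by
  have : (1 : F) - t * q ^ 2
      = algebraMap (MvPolynomial (Fin 3) ℚ) F (1 - X 0 * X 2 ^ 2) := by
    simp [t, q, map_sub, map_mul, map_pow]
  rw [this]; exact alg_ne_zero _ (by simp)

lemma h2 : (1 : F) - w * q ^ 3 ≠ 0 := by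
  have : (1 : F) - w * q ^ 3
      = algebraMap (MvPolynomial (Fin 3) ℚ) F (1 - X 1 * X 2 ^ 3) := by
    simp [w, q, map_sub, map_mul, map_pow]
  rw [this]; exact alg_ne_zero _ (by simp)

lemma h3 : (1 : F) - q ≠ 0 := by
  have : (1 : F) - q = algebraMap (MvPolynomial (Fin 3) ℚ) F (1 - X 2) := by
    simp [q, map_sub]
  rw [this]; exact alg_ne_zero _ (by simp)

lemma h4 : (1 : F) - q ^ 2 ≠ 0 := by
  have : (1 : F) - q ^ 2 = algebraMap (MvPolynomial (Fin 3) ℚ) F (1 - X 2 ^ 2) := by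
    simp [q, map_sub, map_pow]
  rw [this]; exact alg_ne_zero _ (by simp)

theorem stmt16 :
    1 + q ^ 2 * (t + w * q) / (1 - t * q ^ 2)
        + q ^ 6 * (w ^ 2 + q + q ^ 2) / ((1 - t * q ^ 2) * (1 - w * q ^ 3))
      = ((1 - q ^ 2) * (1 - q ^ 3) / ((1 - t * q ^ 2) * (1 - w * q ^ 3))) *
          (1 + q ^ 2 / (1 - q) + q ^ 6 / ((1 - q) * (1 - q ^ 2))) := by
  have h1' : (1 : F) - q ^ 2 * t ≠ 0 := by rw [mul_comm]; exact h1
  have h2' : (1 : F) - q ^ 3 * w ≠ 0 := by rw [mul_comm]; exact h2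
  field_simp [h1', h2', h3, h4]
  ring

end
end
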